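/- There exist a constant ν₀ ∈ (0,1) and a constant C > 0, depending only on γ, ρ_+, u_+, θ_+, such that for all ν ∈ (0, ν₀]: sup_{ξ ∈ ℝ} |ρ^{r₃}_ν(ξ) − ρ^{r₃}(ξ)| ≤ C ν, sup_{ξ ∈ ℝ} |m^{r₃}_ν(ξ) − m^{r₃}(ξ)| ≤ C ν, and sup_{ξ ∈ ℝ} |n^{r₃}_ν(ξ) − n^{r₃}(ξ)| ≤ C ν. -/
import Mathlib


noncomputable section

/-- S₊ = log θ₊ − (γ−1) log ρ₊ -/
def Splus (γ ρp θp : ℝ) : ℝ := Real.log θp - (γ - 1) * Real.log ρp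

/-- k = √(γ(γ−1) e^{S₊}) -/
def kconst (γ ρp θp : ℝ) : ℝ := Real.sqrt (γ * (γ - 1) * Real.exp (Splus γ ρp θp))

/-- u₋ = u₊ − (2/(γ−1)) k ρ₊^{(γ−1)/2} -/
def uminus (γ ρp θp up : ℝ) : ℝ :=
  up - 2 / (γ - 1) * kconst γ ρp θp * ρp ^ ((γ - 1) / 2)

/-- λ₊ = u₊ + k ρ₊^{(γ−1)/2} -/
def lamPlus (γ ρp θp up : ℝ) : ℝ := up + kconst γ ρp θp * ρp ^ ((γ - 1) / 2)

/-- the density ρ^{r₃} of the 3-rarefaction wave with left vacuum state -/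
def rho3 (γ ρp θp up : ℝ) (ξ : ℝ) : ℝ :=
  if ξ < uminus γ ρp θp up then 0
  else if ξ ≤ lamPlus γ ρp θp up then
    ((γ - 1) * (ξ - uminus γ ρp θp up) / ((γ + 1) * kconst γ ρp θp)) ^ (2 / (γ - 1))
  else ρp

/-- the velocity u^{r₃} of the 3-rarefaction wave -/
def u3 (γ ρp θp up : ℝ) (ξ : ℝ) : ℝ :=
  if ξ ≤ lamPlus γ ρp θp up then
    uminus γ ρp θp up + 2 * (ξ - uminus γ ρp θp up) / (γ + 1)
  else up

/-- the temperature θ^{r₃} of the 3-rarefaction wave -/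
def theta3 (γ ρp θp up : ℝ) (ξ : ℝ) : ℝ :=
  Real.exp (Splus γ ρp θp) * rho3 γ ρp θp up ξ ^ (γ - 1)

/-- the momentum m^{r₃} = ρ^{r₃} u^{r₃} (equal to 0 in the vacuum region) -/
def m3 (γ ρp θp up : ℝ) (ξ : ℝ) : ℝ := rho3 γ ρp θp up ξ * u3 γ ρp θp up ξ

/-- the total internal energy n^{r₃} = ρ^{r₃} θ^{r₃} (0 in the vacuum region) -/
def n3 (γ ρp θp up : ℝ) (ξ : ℝ) : ℝ := rho3 γ ρp θp up ξ * theta3 γ ρp θp up ξ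

/-- u_ν = u₋ + (2/(γ−1)) k ν^{(γ−1)/2} -/
def unu (γ ρp θp up ν : ℝ) : ℝ :=
  uminus γ ρp θp up + 2 / (γ - 1) * kconst γ ρp θp * ν ^ ((γ - 1) / 2)

/-- λ₋ = u_ν + k ν^{(γ−1)/2} -/
def lamMinus (γ ρp θp up ν : ℝ) : ℝ :=
  unu γ ρp θp up ν + kconst γ ρp θp * ν ^ ((γ - 1) / 2)

/-- the density of the cut-off 3-rarefaction wave -/
def rho3nu (γ ρp θp up ν : ℝ) (ξ : ℝ) : ℝ :=
  if ξ < lamMinus γ ρp θp up ν then ν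
  else if ξ ≤ lamPlus γ ρp θp up then rho3 γ ρp θp up ξ
  else ρp

/-- the velocity of the cut-off 3-rarefaction wave -/
def u3nu (γ ρp θp up ν : ℝ) (ξ : ℝ) : ℝ :=
  if ξ < lamMinus γ ρp θp up ν then unu γ ρp θp up ν
  else if ξ ≤ lamPlus γ ρp θp up then u3 γ ρp θp up ξ
  else up

/-- the temperature of the cut-off 3-rarefaction wave -/
def theta3nu (γ ρp θp up ν : ℝ) (ξ : ℝ) : ℝ :=
  Real.exp (Splus γ ρp θp) * rho3nu γ ρp θp up ν ξ ^ (γ - 1)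

/-- the momentum of the cut-off 3-rarefaction wave -/
def m3nu (γ ρp θp up ν : ℝ) (ξ : ℝ) : ℝ :=
  rho3nu γ ρp θp up ν ξ * u3nu γ ρp θp up ν ξ

/-- the total internal energy of the cut-off 3-rarefaction wave -/
def n3nu (γ ρp θp up ν : ℝ) (ξ : ℝ) : ℝ :=
  rho3nu γ ρp θp up ν ξ * theta3nu γ ρp θp up ν ξ

set_option maxHeartbeats 1000000 in
/-- Lemma 2.2: the cut-off 3-rarefaction wave converges to the
3-rarefaction wave with vacuum in the sup-norm at rate ν as ν → 0. -/
theorem cutoff_rarefaction_convergence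
    (γ ρp θp up : ℝ) (hγ : 1 < γ) (hρp : 0 < ρp) (hθp : 0 < θp) :
    ∃ ν₀ : ℝ, ν₀ ∈ Set.Ioo (0 : ℝ) 1 ∧ ν₀ < ρp ∧
      ∃ C > (0 : ℝ), ∀ ν ∈ Set.Ioc (0 : ℝ) ν₀,
        (∀ ξ : ℝ, |rho3nu γ ρp θp up ν ξ - rho3 γ ρp θp up ξ| ≤ C * ν) ∧
        (∀ ξ : ℝ, |m3nu γ ρp θp up ν ξ - m3 γ ρp θp up ξ| ≤ C * ν) ∧
        (∀ ξ : ℝ, |n3nu γ ρp θp up ν ξ - n3 γ ρp θp up ξ| ≤ C * ν) := by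

  have hg1 : (0:ℝ) < γ - 1 := by linarith
  have hgp1 : (0:ℝ) < γ + 1 := by linarith
  have hk : 0 < kconst γ ρp θp := by
    exact Real.sqrt_pos.mpr (mul_pos (mul_pos (by linarith : (0:ℝ) < γ) hg1)
      (Real.exp_pos _))
  have hB : (0:ℝ) ≤ |uminus γ ρp θp up| + 2 / (γ - 1) * kconst γ ρp θp := by positivity
  have hE := Real.exp_pos (Splus γ ρp θp)
  refine ⟨min (ρp/2) (1/2), ⟨lt_min (by positivity) (by norm_num),
      lt_of_le_of_lt (min_le_right _ _) (by norm_num)⟩,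
    lt_of_le_of_lt (min_le_left _ _) (by linarith),
    1 + 2*(|uminus γ ρp θp up| + 2 / (γ - 1) * kconst γ ρp θp) + Real.exp (Splus γ ρp θp),
    by positivity, ?_⟩
  rintro ν ⟨hν0, hνle⟩
  have hν1 : ν ≤ 1 := hνle.trans ((min_le_right _ _).trans (by norm_num))
  have hνρ : ν < ρp := lt_of_le_of_lt (hνle.trans (min_le_left _ _)) (by linarith)
  have he : (0:ℝ) < (γ-1)/2 := by positivity
  have hνe0 : 0 < ν ^ ((γ-1)/2) := Real.rpow_pos_of_pos hν0 _
  have hνe1 : ν ^ ((γ-1)/2) ≤ 1 := Real.rpow_le_one hν0.le hν1 he.le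
  have hνeρ : ν ^ ((γ-1)/2) ≤ ρp ^ ((γ-1)/2) := Real.rpow_le_rpow hν0.le hνρ.le he.le
  have hlm : lamMinus γ ρp θp up ν
      = uminus γ ρp θp up + (2/(γ-1) + 1) * kconst γ ρp θp * ν ^ ((γ-1)/2) := by
    unfold lamMinus unu; ring
  have hlp : lamPlus γ ρp θp up
      = uminus γ ρp θp up + (2/(γ-1) + 1) * kconst γ ρp θp * ρp ^ ((γ-1)/2) := by
    unfold lamPlus uminus; ring
  have hc1 : (0:ℝ) < 2/(γ-1) + 1 := by positivity
  have hlmlp : lamMinus γ ρp θp up ν ≤ lamPlus γ ρp θp up := by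
    rw [hlm, hlp]
    linarith [mul_le_mul_of_nonneg_left hνeρ (le_of_lt (mul_pos hc1 hk))]
  have humlm : uminus γ ρp θp up < lamMinus γ ρp θp up ν := by
    rw [hlm]; linarith [mul_pos (mul_pos hc1 hk) hνe0]
  -- density bound in the vacuum-side region
  have hrho : ∀ ξ : ℝ, ξ < lamMinus γ ρp θp up ν →
      0 ≤ rho3 γ ρp θp up ξ ∧ rho3 γ ρp θp up ξ ≤ ν := by
    intro ξ hξ
    have hξlp : ξ ≤ lamPlus γ ρp θp up := hξ.le.trans hlmlp
    unfold rho3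
    split_ifs with h1
    · exact ⟨le_rfl, hν0.le⟩
    · have hum : uminus γ ρp θp up ≤ ξ := not_lt.mp h1
      have hden : (0:ℝ) < (γ+1) * kconst γ ρp θp := by positivity
      have hbase0 : 0 ≤ (γ - 1) * (ξ - uminus γ ρp θp up) / ((γ + 1) * kconst γ ρp θp) := by
        apply div_nonneg _ hden.le
        nlinarith
      have hbase : (γ - 1) * (ξ - uminus γ ρp θp up) / ((γ + 1) * kconst γ ρp θp)
          ≤ ν ^ ((γ-1)/2) := by
        rw [div_le_iff₀ hden]
        rw [hlm] at hξ
        have hξ' : ξ - uminus γ ρp θp up ≤ (2/(γ-1) + 1) * kconst γ ρp θp * ν ^ ((γ-1)/2) := by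
          linarith
        have hmul := mul_le_mul_of_nonneg_left hξ' hg1.le
        have heq2 : (γ-1) * ((2/(γ-1) + 1) * kconst γ ρp θp * ν ^ ((γ-1)/2))
            = ν ^ ((γ-1)/2) * ((γ+1) * kconst γ ρp θp) := by field_simp; ring
        linarith
      refine ⟨Real.rpow_nonneg hbase0 _, ?_⟩
      calc ((γ - 1) * (ξ - uminus γ ρp θp up) / ((γ + 1) * kconst γ ρp θp)) ^ (2/(γ-1))
          ≤ (ν ^ ((γ-1)/2)) ^ (2/(γ-1)) :=
            Real.rpow_le_rpow hbase0 hbase (by positivity)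
        _ = ν := by
            rw [← Real.rpow_mul hν0.le,
              show (γ-1)/2 * (2/(γ-1)) = 1 by field_simp, Real.rpow_one]
  -- agreement away from the vacuum-side region
  have heq : ∀ ξ : ℝ, lamMinus γ ρp θp up ν ≤ ξ →
      rho3nu γ ρp θp up ν ξ = rho3 γ ρp θp up ξ ∧
      u3nu γ ρp θp up ν ξ = u3 γ ρp θp up ξ := by
    intro ξ hξ
    have hnl : ¬ ξ < lamMinus γ ρp θp up ν := not_lt.mpr hξ
    have hum : ¬ ξ < uminus γ ρp θp up := not_lt.mpr ((humlm.le.trans hξ))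
    constructor
    · unfold rho3nu rho3
      simp only [if_neg hnl, if_neg hum]
      split_ifs <;> rfl
    · unfold u3nu u3
      simp only [if_neg hnl]
      split_ifs <;> rfl
  -- velocity bounds
  have huνB : |unu γ ρp θp up ν|
      ≤ |uminus γ ρp θp up| + 2/(γ-1) * kconst γ ρp θp := by
    unfold unu
    refine (abs_add_le _ _).trans ?_
    rw [abs_of_nonneg (show (0:ℝ) ≤ 2/(γ-1) * kconst γ ρp θp * ν ^ ((γ-1)/2) by positivity)]
    linarith [mul_le_of_le_one_right
      (show (0:ℝ) ≤ 2/(γ-1) * kconst γ ρp θp by positivity) hνe1]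
  have hu3B : ∀ ξ : ℝ, uminus γ ρp θp up ≤ ξ → ξ < lamMinus γ ρp θp up ν →
      |u3 γ ρp θp up ξ| ≤ |uminus γ ρp θp up| + 2/(γ-1) * kconst γ ρp θp := by
    intro ξ h1 h2
    have hξlp : ξ ≤ lamPlus γ ρp θp up := h2.le.trans hlmlp
    unfold u3
    rw [if_pos hξlp]
    have ht0 : 0 ≤ 2 * (ξ - uminus γ ρp θp up) / (γ + 1) := by
      apply div_nonneg _ hgp1.le; linarith
    have ht1 : 2 * (ξ - uminus γ ρp θp up) / (γ + 1) ≤ 2/(γ-1) * kconst γ ρp θp := by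
      rw [div_le_iff₀ hgp1]
      rw [hlm] at h2
      have hke : (2/(γ-1)+1) * kconst γ ρp θp * ν ^ ((γ-1)/2)
          ≤ (2/(γ-1)+1) * kconst γ ρp θp :=
        mul_le_of_le_one_right (mul_pos hc1 hk).le hνe1
      have heqq : 2*((2/(γ-1)+1) * kconst γ ρp θp) = 2/(γ-1) * kconst γ ρp θp * (γ+1) := by
        field_simp; ring
      linarith
    refine (abs_add_le _ _).trans ?_
    rw [abs_of_nonneg ht0]
    linarith
  have hBν : 0 ≤ (|uminus γ ρp θp up| + 2/(γ-1) * kconst γ ρp θp) * ν :=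
    mul_nonneg hB hν0.le
  have hEν : 0 < Real.exp (Splus γ ρp θp) * ν := mul_pos hE hν0
  refine ⟨?_, ?_, ?_⟩
  · -- density estimate
    intro ξ
    by_cases hξ : ξ < lamMinus γ ρp θp up ν
    · have hr := hrho ξ hξ
      have hρν : rho3nu γ ρp θp up ν ξ = ν := by unfold rho3nu; rw [if_pos hξ]
      rw [hρν, abs_of_nonneg (by linarith)]
      linarith [hBν, hEν.le, hr.1]
    · rw [(heq ξ (not_lt.mp hξ)).1, sub_self, abs_zero]
      exact mul_nonneg (by positivity) hν0.le
  · -- momentum estimate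
    intro ξ
    by_cases hξ : ξ < lamMinus γ ρp θp up ν
    · have hr := hrho ξ hξ
      have hm : m3nu γ ρp θp up ν ξ = ν * unu γ ρp θp up ν := by
        unfold m3nu rho3nu u3nu; rw [if_pos hξ, if_pos hξ]
      rw [hm]
      unfold m3
      have h1 : |ν * unu γ ρp θp up ν|
          ≤ ν * (|uminus γ ρp θp up| + 2/(γ-1) * kconst γ ρp θp) := by
        rw [abs_mul, abs_of_nonneg hν0.le]
        exact mul_le_mul_of_nonneg_left huνB hν0.le
      by_cases hum : ξ < uminus γ ρp θp up
      · have hz : rho3 γ ρp θp up ξ = 0 := by unfold rho3; rw [if_pos hum]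
        rw [hz, zero_mul, sub_zero]
        linarith [h1, hBν, hEν.le, hν0]
      · have hu3 := hu3B ξ (not_lt.mp hum) hξ
        have h2 : |rho3 γ ρp θp up ξ * u3 γ ρp θp up ξ|
            ≤ ν * (|uminus γ ρp θp up| + 2/(γ-1) * kconst γ ρp θp) := by
          rw [abs_mul, abs_of_nonneg hr.1]
          exact mul_le_mul hr.2 hu3 (abs_nonneg _) hν0.le
        have h3 := abs_sub (ν * unu γ ρp θp up ν) (rho3 γ ρp θp up ξ * u3 γ ρp θp up ξ)
        linarith [h1, h2, h3, hEν.le, hν0]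
    · have h := heq ξ (not_lt.mp hξ)
      unfold m3nu m3
      rw [h.1, h.2, sub_self, abs_zero]
      exact mul_nonneg (by positivity) hν0.le
  · -- energy estimate
    intro ξ
    by_cases hξ : ξ < lamMinus γ ρp θp up ν
    · have hr := hrho ξ hξ
      have hn : n3nu γ ρp θp up ν ξ
          = ν * (Real.exp (Splus γ ρp θp) * ν ^ (γ-1)) := by
        unfold n3nu theta3nu rho3nu; rw [if_pos hξ]
      rw [hn]
      unfold n3 theta3
      have hx : rho3 γ ρp θp up ξ ^ (γ-1) ≤ ν ^ (γ-1) :=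
        Real.rpow_le_rpow hr.1 hr.2 hg1.le
      have hx0 : 0 ≤ rho3 γ ρp θp up ξ ^ (γ-1) := Real.rpow_nonneg hr.1 _
      have hνg1 : ν ^ (γ-1) ≤ 1 := Real.rpow_le_one hν0.le hν1 hg1.le
      have hνg0 : 0 ≤ ν ^ (γ-1) := Real.rpow_nonneg hν0.le _
      have hmm := mul_le_mul hr.2 hx hx0 hν0.le
      have hle : rho3 γ ρp θp up ξ * (Real.exp (Splus γ ρp θp) * rho3 γ ρp θp up ξ ^ (γ-1))
          ≤ ν * (Real.exp (Splus γ ρp θp) * ν ^ (γ-1)) := by nlinarith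
      have h0 : 0 ≤ rho3 γ ρp θp up ξ * (Real.exp (Splus γ ρp θp) * rho3 γ ρp θp up ξ ^ (γ-1)) :=
        mul_nonneg hr.1 (mul_nonneg hE.le hx0)
      have key : ν * (Real.exp (Splus γ ρp θp) * ν ^ (γ-1)) ≤ Real.exp (Splus γ ρp θp) * ν := by
        nlinarith [mul_pos hE hν0]
      rw [abs_of_nonneg (by linarith)]
      linarith [key, h0, hBν, hν0]
    · have h := heq ξ (not_lt.mp hξ)
      unfold n3nu n3 theta3nu theta3
      rw [h.1, sub_self, abs_zero]
      exact mul_nonneg (by positivity) hν0.le
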